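/- Let p = (p_0, p_1, p_2) and q = (q_0, q_1, q_2) be probability distributions on {0,1,2} with p_0 ≥ p_1 ≥ p_2 and q_0 ≥ q_1 ≥ q_2, and suppose they have equal Shannon entropies H(p) = H(q). If p_0 ≤ q_0, then ‖p − U‖_2 ≤ ‖q − U‖_2, where U = (1/3, 1/3, 1/3) is the uniform distribution. (In other words, along the entropy circle H(p) = t, restricted to sorted distributions, the Euclidean distance to the uniform distribution is an increasing function of the largest probability p_0.) -/

import Mathlib

open Real

private lemma log_ineq1 {u v : ℝ} (hu : 0 < u) (huv : u ≤ v) :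
    v - u ≤ v * (Real.log v - Real.log u) := by
  have hv : 0 < v := lt_of_lt_of_le hu huv
  have h := Real.log_le_sub_one_of_pos (show 0 < u / v by positivity)
  rw [Real.log_div hu.ne' hv.ne'] at h
  have h2 := mul_le_mul_of_nonneg_left h hv.le
  have h3 : v * (u / v) = u := by field_simp
  nlinarith [h2, h3]

/-- Key estimate for the "widening" transfer `(y, x) ↦ (y - a, x + a)`:
the entropy production is controlled by `a (x - y + a) / (y - a)`. -/
private lemma lemB {x y a : ℝ} (ha : 0 ≤ a) (hay : a < y) (hyx : y ≤ x) :
    (y - a) * ((x + a) * Real.log (x + a) - x * Real.log x - y * Real.log y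
      + (y - a) * Real.log (y - a)) ≤ a * (x - y + a) := by
  have hy : 0 < y := lt_of_le_of_lt ha hay
  have hx : 0 < x := lt_of_lt_of_le hy hyx
  set G : ℝ → ℝ := fun t => t * (x - y + t) -
    (y - a) * ((x + t) * Real.log (x + t) - x * Real.log x - y * Real.log y
      + (y - t) * Real.log (y - t)) with hGdef
  have hderiv : ∀ t ∈ Set.Icc (0:ℝ) a, HasDerivAt G
      ((x - y + 2*t) - (y - a) * (Real.log (x + t) - Real.log (y - t))) t := by
    intro t ht
    obtain ⟨ht0, hta⟩ := ht
    have hxt : (0:ℝ) < x + t := by linarith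
    have hyt : (0:ℝ) < y - t := by linarith
    have hA : HasDerivAt (fun t : ℝ => (x + t) * Real.log (x + t))
        (Real.log (x + t) + 1) t := by
      have h1 : HasDerivAt (fun t : ℝ => x + t) 1 t := (hasDerivAt_id t).const_add x
      have h2 := (Real.hasDerivAt_mul_log hxt.ne').comp t h1
      simpa [Function.comp_def] using h2
    have hB : HasDerivAt (fun t : ℝ => (y - t) * Real.log (y - t))
        (-(Real.log (y - t) + 1)) t := by
      have h1 : HasDerivAt (fun t : ℝ => y - t) (-1) t := (hasDerivAt_id t).const_sub y
      have h2 := (Real.hasDerivAt_mul_log hyt.ne').comp t h1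
      simpa [Function.comp_def] using h2
    have hpoly : HasDerivAt (fun t : ℝ => t * (x - y + t)) (x - y + 2*t) t := by
      have h1 : HasDerivAt (fun t : ℝ => t * (x - y + t))
          (1 * (x - y + t) + t * 1) t :=
        (hasDerivAt_id t).mul ((hasDerivAt_id t).const_add (x - y))
      convert h1 using 1; ring
    have hin : HasDerivAt (fun t : ℝ => (x + t) * Real.log (x + t) - x * Real.log x
        - y * Real.log y + (y - t) * Real.log (y - t))
        ((Real.log (x + t) + 1) + (-(Real.log (y - t) + 1))) t :=
      ((hA.sub_const (x * Real.log x)).sub_const (y * Real.log y)).add hB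
    have := hpoly.sub (hin.const_mul (y - a))
    refine this.congr_deriv ?_
    ring
  have hmono : MonotoneOn G (Set.Icc 0 a) := by
    apply monotoneOn_of_deriv_nonneg (convex_Icc 0 a)
    · exact fun t ht => (hderiv t ht).continuousAt.continuousWithinAt
    · intro t ht
      rw [interior_Icc] at ht
      exact ((hderiv t ⟨ht.1.le, ht.2.le⟩).differentiableAt).differentiableWithinAt
    · intro t ht
      rw [interior_Icc] at ht
      obtain ⟨ht0, hta⟩ := ht
      rw [(hderiv t ⟨ht0.le, hta.le⟩).deriv]
      have hxt : (0:ℝ) < x + t := by linarith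
      have hyt : (0:ℝ) < y - t := by linarith
      have hytxt : y - t ≤ x + t := by linarith
      have h1 : (y - t) * (Real.log (x + t) - Real.log (y - t)) ≤ (x + t) - (y - t) := by
        have h := Real.log_le_sub_one_of_pos (show 0 < (x+t) / (y-t) by positivity)
        rw [Real.log_div hxt.ne' hyt.ne'] at h
        have h2 := mul_le_mul_of_nonneg_left h hyt.le
        have h3 : (y - t) * ((x + t) / (y - t)) = x + t := by field_simp
        nlinarith [h2, h3]
      have h2 : 0 ≤ Real.log (x + t) - Real.log (y - t) := by
        have := Real.log_le_log hyt hytxt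
        linarith
      have h3 : (y - a) * (Real.log (x + t) - Real.log (y - t)) ≤
          (y - t) * (Real.log (x + t) - Real.log (y - t)) := by
        apply mul_le_mul_of_nonneg_right _ h2
        linarith
      linarith
  have h0 : G 0 ≤ G a := hmono (Set.mem_Icc.2 ⟨le_refl 0, ha⟩) (Set.mem_Icc.2 ⟨ha, le_refl a⟩) ha
  have hG0 : G 0 = 0 := by simp [hGdef]
  have hGa : G a = a * (x - y + a) -
    (y - a) * ((x + a) * Real.log (x + a) - x * Real.log x - y * Real.log y
      + (y - a) * Real.log (y - a)) := by simp [hGdef]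
  rw [hG0, hGa] at h0
  linarith

/-- Key estimate for the "spreading" transfer `(u, v) ↦ (u - c, v + c)`:
the entropy production is at least `c (v - u + c) / (v + c)`. -/
private lemma lemC {u v c : ℝ} (hc : 0 ≤ c) (hcu : c ≤ u) (huv : u ≤ v) :
    c * (v - u + c) ≤ (v + c) * ((v + c) * Real.log (v + c) - v * Real.log v
      - u * Real.log u + (u - c) * Real.log (u - c)) := by
  set G : ℝ → ℝ := fun t => (v + c) * ((v + t) * Real.log (v + t) - v * Real.log v
      - u * Real.log u + (u - t) * Real.log (u - t)) - t * (v - u + t) with hGdef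
  have hcont : Continuous G := by
    have h1 : Continuous fun t : ℝ => Real.negMulLog (v + t) :=
      Real.continuous_negMulLog.comp (continuous_const.add continuous_id)
    have h2 : Continuous fun t : ℝ => Real.negMulLog (u - t) :=
      Real.continuous_negMulLog.comp (continuous_const.sub continuous_id)
    have hGeq : G = fun t => (v + c) * (-(Real.negMulLog (v + t)) - v * Real.log v
        - u * Real.log u + -(Real.negMulLog (u - t))) - t * (v - u + t) := by
      funext t
      simp only [hGdef, Real.negMulLog]
      ring
    rw [hGeq]
    exact (continuous_const.mul (((h1.neg.sub continuous_const).sub continuous_const).add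
      h2.neg)).sub (continuous_id.mul (by continuity))
  have hderiv : ∀ t ∈ Set.Ioo (0:ℝ) c, HasDerivAt G
      ((v + c) * (Real.log (v + t) - Real.log (u - t)) - (v - u + 2*t)) t := by
    intro t ht
    obtain ⟨ht0, htc⟩ := ht
    have hvt : (0:ℝ) < v + t := by linarith
    have hut : (0:ℝ) < u - t := by linarith
    have hA : HasDerivAt (fun t : ℝ => (v + t) * Real.log (v + t))
        (Real.log (v + t) + 1) t := by
      have h1 : HasDerivAt (fun t : ℝ => v + t) 1 t := (hasDerivAt_id t).const_add v
      simpa [Function.comp_def] using (Real.hasDerivAt_mul_log hvt.ne').comp t h1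
    have hB : HasDerivAt (fun t : ℝ => (u - t) * Real.log (u - t))
        (-(Real.log (u - t) + 1)) t := by
      have h1 : HasDerivAt (fun t : ℝ => u - t) (-1) t := (hasDerivAt_id t).const_sub u
      simpa [Function.comp_def] using (Real.hasDerivAt_mul_log hut.ne').comp t h1
    have hpoly : HasDerivAt (fun t : ℝ => t * (v - u + t)) (v - u + 2*t) t := by
      have h1 : HasDerivAt (fun t : ℝ => t * (v - u + t))
          (1 * (v - u + t) + t * 1) t :=
        (hasDerivAt_id t).mul ((hasDerivAt_id t).const_add (v - u))
      convert h1 using 1; ring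
    have hin : HasDerivAt (fun t : ℝ => (v + t) * Real.log (v + t) - v * Real.log v
        - u * Real.log u + (u - t) * Real.log (u - t))
        ((Real.log (v + t) + 1) + (-(Real.log (u - t) + 1))) t :=
      ((hA.sub_const (v * Real.log v)).sub_const (u * Real.log u)).add hB
    have := (hin.const_mul (v + c)).sub hpoly
    refine this.congr_deriv ?_
    ring
  have hmono : MonotoneOn G (Set.Icc 0 c) := by
    apply monotoneOn_of_deriv_nonneg (convex_Icc 0 c) hcont.continuousOn
    · intro t ht
      rw [interior_Icc] at ht
      exact ((hderiv t ht).differentiableAt).differentiableWithinAt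
    · intro t ht
      rw [interior_Icc] at ht
      rw [(hderiv t ht).deriv]
      obtain ⟨ht0, htc⟩ := ht
      have hvt : (0:ℝ) < v + t := by linarith
      have hut : (0:ℝ) < u - t := by linarith
      have hutvt : u - t ≤ v + t := by linarith
      have h1 : (v + t) - (u - t) ≤ (v + t) * (Real.log (v + t) - Real.log (u - t)) :=
        log_ineq1 hut hutvt
      have h2 : 0 ≤ Real.log (v + t) - Real.log (u - t) := by
        have := Real.log_le_log hut hutvt
        linarith
      have h3 : (v + t) * (Real.log (v + t) - Real.log (u - t)) ≤
          (v + c) * (Real.log (v + t) - Real.log (u - t)) := by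
        apply mul_le_mul_of_nonneg_right _ h2
        linarith
      linarith
  have h0 : G 0 ≤ G c := hmono (Set.mem_Icc.2 ⟨le_refl 0, hc⟩) (Set.mem_Icc.2 ⟨hc, le_refl c⟩) hc
  have hG0 : G 0 = 0 := by simp [hGdef]
  have hGc : G c = (v + c) * ((v + c) * Real.log (v + c) - v * Real.log v
      - u * Real.log u + (u - c) * Real.log (u - c)) - c * (v - u + c) := by simp [hGdef]
  rw [hG0, hGc] at h0
  linarith

/-- On the entropy circle `H(p) = t` in the simplex of probability
distributions on a three-element set, restricted to sorted distributions
`p₀ ≥ p₁ ≥ p₂`, the Euclidean distance to the uniform distribution `U = (1/3,1/3,1/3)`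
is an increasing function of the largest probability `p₀`. -/
theorem sorted_entropy_circle_dist_mono
    (p q : Fin 3 → ℝ)
    (hp_nonneg : ∀ i, 0 ≤ p i) (hp_sum : ∑ i, p i = 1)
    (hq_nonneg : ∀ i, 0 ≤ q i) (hq_sum : ∑ i, q i = 1)
    (hp_sorted : p 1 ≤ p 0 ∧ p 2 ≤ p 1)
    (hq_sorted : q 1 ≤ q 0 ∧ q 2 ≤ q 1)
    (hent : ∑ i, Real.negMulLog (p i) = ∑ i, Real.negMulLog (q i))
    (hle : p 0 ≤ q 0) :
    Real.sqrt (∑ i, (p i - 1/3) ^ 2) ≤ Real.sqrt (∑ i, (q i - 1/3) ^ 2) := by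
  obtain ⟨hp01, hp12⟩ := hp_sorted
  obtain ⟨hq01, hq12⟩ := hq_sorted
  have hp0 := hp_nonneg 0; have hp1 := hp_nonneg 1; have hp2 := hp_nonneg 2
  have hq0 := hq_nonneg 0; have hq1 := hq_nonneg 1; have hq2 := hq_nonneg 2
  simp only [Fin.sum_univ_three] at hp_sum hq_sum hent
  simp only [Real.negMulLog] at hent
  apply Real.sqrt_le_sqrt
  rw [Fin.sum_univ_three, Fin.sum_univ_three]
  have ep1 : p 1 = 1 - p 0 - p 2 := by linarith
  have eq1 : q 1 = 1 - q 0 - q 2 := by linarith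
  rcases le_or_gt (q 2) (p 2) with hc | hc
  · -- easy case: q₂ ≤ p₂, pure algebra (Schur-convexity of ∑ xᵢ²)
    rw [ep1, eq1]
    nlinarith [mul_nonneg (sub_nonneg.2 hle)
        (show (0:ℝ) ≤ q 0 + p 0 - (1 - q 0 - q 2) - (1 - p 0 - p 2) by
          rw [← ep1, ← eq1]; linarith),
      mul_nonneg (sub_nonneg.2 hc)
        (show (0:ℝ) ≤ (1 - q 0 - q 2) + (1 - p 0 - p 2) - q 2 - p 2 by
          rw [← ep1, ← eq1]; linarith)]
  · -- hard case: p₂ < q₂; here the entropy equality is essential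
    have hE : p 0 * Real.log (p 0) + p 1 * Real.log (p 1) + p 2 * Real.log (p 2)
        = q 0 * Real.log (q 0) + q 1 * Real.log (q 1) + q 2 * Real.log (q 2) := by
      linarith
    have hq2pos : 0 < q 2 := lt_of_le_of_lt hp2 hc
    have hq1pos : 0 < q 1 := lt_of_lt_of_le hq2pos hq12
    have ha : (0:ℝ) ≤ q 0 - p 0 := by linarith
    have hw : p 1 - (q 0 - p 0) = q 1 + (q 2 - p 2) := by linarith
    have hay : q 0 - p 0 < p 1 := by
      have : 0 < q 1 + (q 2 - p 2) := by linarith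
      linarith [hw]
    have hB := lemB (x := p 0) (y := p 1) (a := q 0 - p 0) ha hay hp01
    rw [show p 0 + (q 0 - p 0) = q 0 from by ring, hw] at hB
    have hstuff : q 0 * Real.log (q 0) - p 0 * Real.log (p 0) - p 1 * Real.log (p 1)
        + (q 1 + (q 2 - p 2)) * Real.log (q 1 + (q 2 - p 2))
        = (q 1 + (q 2 - p 2)) * Real.log (q 1 + (q 2 - p 2)) - q 1 * Real.log (q 1)
          - q 2 * Real.log (q 2) + p 2 * Real.log (p 2) := by linarith
    rw [hstuff] at hB
    have hC := lemC (u := q 2) (v := q 1) (c := q 2 - p 2)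
      (by linarith) (by linarith) hq12
    rw [show q 2 - (q 2 - p 2) = p 2 from by ring] at hC
    have hkey : (q 2 - p 2) * (q 1 - q 2 + (q 2 - p 2)) ≤
        (q 0 - p 0) * (p 0 - p 1 + (q 0 - p 0)) := le_trans hC hB
    rw [ep1, eq1]
    rw [ep1, eq1] at hkey
    have hid : (q 0 - 1/3) ^ 2 + (1 - q 0 - q 2 - 1/3) ^ 2 + (q 2 - 1/3) ^ 2
        - ((p 0 - 1/3) ^ 2 + (1 - p 0 - p 2 - 1/3) ^ 2 + (p 2 - 1/3) ^ 2)
        = 2 * ((q 0 - p 0) * (p 0 - (1 - p 0 - p 2) + (q 0 - p 0))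
          - (q 2 - p 2) * ((1 - q 0 - q 2) - q 2 + (q 2 - p 2))) := by ring
    linarith [hkey, hid]
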